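/- Let d ≥ 1 and let z', z'' ∈ {•,+,−}^d be such that, for every k, either z'_k = z''_k ∈ {+,−}, or (z'_k, z''_k) = (•, −), or (z'_k, z''_k) = (+, •). Define z ∈ {•,+,−}^d by z_k = • if z'_k = • or z''_k = •, and z_k = z'_k otherwise. Then for every 0 < ε < 1 the intersection P∨_{z'} ∩ P̃∨_{z''}(ε) is nonempty, and it converges to the dual cell P∨_{z} in Hausdorff distance as ε → 0⁺. -/

import Mathlib

/-- The three possible entries of a cell label of the hypercube:
`dot` = `•`, `pls` = `+`, `mns` = `−`. -/
inductive Sgn : Type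
  | dot : Sgn
  | pls : Sgn
  | mns : Sgn
  deriving DecidableEq

instance : Fintype Sgn :=
  ⟨{Sgn.dot, Sgn.pls, Sgn.mns}, fun x => by cases x <;> simp⟩

/-- The dual cell `P∨_z ⊆ [−1,1]^d` of the hypercube cell labeled `z ∈ {•,+,−}^d`:
`x_k = 0` if `z_k = •`, `x_k ≥ 0` if `z_k = +`, and `x_k ≤ 0` if `z_k = −`. -/
def dualCell {d : ℕ} (z : Fin d → Sgn) : Set (EuclideanSpace ℝ (Fin d)) :=
  {x | (∀ k, x k ∈ Set.Icc (-1 : ℝ) 1) ∧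
    ∀ k, (z k = Sgn.dot → x k = 0) ∧ (z k = Sgn.pls → 0 ≤ x k) ∧ (z k = Sgn.mns → x k ≤ 0)}

/-- The shifted dual cell `P̃∨_z(ε) ⊆ [−1,1]^d`, obtained by translating the defining
constraints of `P∨_z` by `ε` in every coordinate (shifting along `(1,…,1)` by `ε`):
`x_k = ε` if `z_k = •`, `x_k ≥ ε` if `z_k = +`, and `x_k ≤ ε` if `z_k = −`. -/
def shiftedDualCell {d : ℕ} (z : Fin d → Sgn) (ε : ℝ) : Set (EuclideanSpace ℝ (Fin d)) :=
  {x | (∀ k, x k ∈ Set.Icc (-1 : ℝ) 1) ∧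
    ∀ k, (z k = Sgn.dot → x k = ε) ∧ (z k = Sgn.pls → ε ≤ x k) ∧ (z k = Sgn.mns → x k ≤ ε)}

open Filter

/-- Let `z', z'' ∈ {•,+,−}^d` be such that every coordinate satisfies
`z'_k = z''_k ∈ {+,−}`, or `(z'_k, z''_k) = (•, −)`, or `(z'_k, z''_k) = (+, •)`.
Define `z` by `z_k = •` if `z'_k = •` or `z''_k = •`, and `z_k = z'_k` otherwise. Then for
every `0 < ε < 1` the intersection `P∨_{z'} ∩ P̃∨_{z''}(ε)` is nonempty, and it converges
to `P∨_z` in Hausdorff distance as `ε → 0⁺`. -/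
lemma euclid_dist_le {d : ℕ} (x y : EuclideanSpace ℝ (Fin d)) (ε : ℝ) (hε : 0 ≤ ε)
    (hc : ∀ k, |x k - y k| ≤ ε) : dist x y ≤ Real.sqrt d * ε := by
  rw [EuclideanSpace.dist_eq]
  have h1 : ∑ k, dist (x k) (y k) ^ 2 ≤ (d : ℝ) * ε ^ 2 := by
    calc ∑ k, dist (x k) (y k) ^ 2 ≤ ∑ _k : Fin d, ε ^ 2 :=
          Finset.sum_le_sum fun k _ => by
            have := hc k
            rw [Real.dist_eq]
            nlinarith [abs_nonneg (x k - y k)]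
      _ = (d : ℝ) * ε ^ 2 := by simp [mul_comm]
  calc Real.sqrt (∑ k, dist (x k) (y k) ^ 2) ≤ Real.sqrt ((d : ℝ) * ε ^ 2) :=
        Real.sqrt_le_sqrt h1
    _ = Real.sqrt d * ε := by
        rw [Real.sqrt_mul (Nat.cast_nonneg d), Real.sqrt_sq hε]

theorem dualCell_shifted_limit (d : ℕ) (hd : 1 ≤ d) (z' z'' : Fin d → Sgn)
    (h : ∀ k, (z' k = z'' k ∧ z' k ≠ Sgn.dot) ∨ (z' k = Sgn.dot ∧ z'' k = Sgn.mns) ∨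
      (z' k = Sgn.pls ∧ z'' k = Sgn.dot)) :
    (∀ ε : ℝ, 0 < ε → ε < 1 → (dualCell z' ∩ shiftedDualCell z'' ε).Nonempty) ∧
    Tendsto
      (fun ε : ℝ => Metric.hausdorffDist (dualCell z' ∩ shiftedDualCell z'' ε)
        (dualCell (fun k => if z' k = Sgn.dot ∨ z'' k = Sgn.dot then Sgn.dot else z' k)))
      (nhdsWithin 0 (Set.Ioi 0)) (nhds 0) := by
  set zz : Fin d → Sgn := fun k => if z' k = Sgn.dot ∨ z'' k = Sgn.dot then Sgn.dot else z' k
    with hzz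
  have hzzval : ∀ k, zz k = if z' k = Sgn.dot ∨ z'' k = Sgn.dot then Sgn.dot else z' k :=
    fun k => rfl
  have sgn_ne : ∀ {a b c : Sgn}, a = b → b ≠ c → a ≠ c := fun h1 h2 => h1 ▸ h2
  -- forward map: from the limit cell into the intersection
  have hmem₁ : ∀ ε : ℝ, 0 < ε → ε ≤ 1 → ∀ x, x ∈ dualCell zz →
      WithLp.toLp 2 (fun k => if z' k = Sgn.pls then max (x k) ε else x k) ∈
        dualCell z' ∩ shiftedDualCell z'' ε := by
    intro ε hε hε1 x hx
    obtain ⟨hb, hc⟩ := hx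
    have hbnd : ∀ k, (if z' k = Sgn.pls then max (x k) ε else x k) ∈ Set.Icc (-1 : ℝ) 1 := by
      intro k
      by_cases hp : z' k = Sgn.pls
      · rw [if_pos hp]
        exact ⟨le_max_of_le_right (by linarith), max_le (hb k).2 hε1⟩
      · rw [if_neg hp]; exact hb k
    have hcz' : ∀ k, (z' k = Sgn.dot → (if z' k = Sgn.pls then max (x k) ε else x k) = 0) ∧
        (z' k = Sgn.pls → 0 ≤ (if z' k = Sgn.pls then max (x k) ε else x k)) ∧
        (z' k = Sgn.mns → (if z' k = Sgn.pls then max (x k) ε else x k) ≤ 0) := by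
      intro k
      refine ⟨fun h1 => ?_, fun h1 => ?_, fun h1 => ?_⟩
      · rw [if_neg (sgn_ne h1 (by decide))]
        have hzzk : zz k = Sgn.dot := by rw [hzzval, if_pos (Or.inl h1)]
        exact (hc k).1 hzzk
      · rw [if_pos h1]
        exact le_max_of_le_right hε.le
      · rw [if_neg (sgn_ne h1 (by decide))]
        rcases h k with ⟨he, hne⟩ | ⟨h2, h3⟩ | ⟨h2, h3⟩
        · have hz2 : z'' k = Sgn.mns := by rw [← he, h1]
          exact (hc k).2.2 (by rw [hzzval, if_neg (by simp [h1, hz2]), h1])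
        · exact absurd (h2.symm.trans h1) (by decide)
        · exact absurd (h2.symm.trans h1) (by decide)
    have hcz'' : ∀ k, (z'' k = Sgn.dot → (if z' k = Sgn.pls then max (x k) ε else x k) = ε) ∧
        (z'' k = Sgn.pls → ε ≤ (if z' k = Sgn.pls then max (x k) ε else x k)) ∧
        (z'' k = Sgn.mns → (if z' k = Sgn.pls then max (x k) ε else x k) ≤ ε) := by
      intro k
      refine ⟨fun h1 => ?_, fun h1 => ?_, fun h1 => ?_⟩
      · -- z'' k = dot ⇒ z' k = pls and x k = 0
        rcases h k with ⟨he, hne⟩ | ⟨h2, h3⟩ | ⟨h2, h3⟩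
        · exact absurd (he.trans h1) hne
        · exact absurd (h3.symm.trans h1) (by decide)
        · rw [if_pos h2]
          have hx0 : x k = 0 := (hc k).1 (by rw [hzzval, if_pos (Or.inr h1)])
          rw [hx0]; exact max_eq_right hε.le
      · -- z'' k = pls ⇒ z' k = pls
        rcases h k with ⟨he, hne⟩ | ⟨h2, h3⟩ | ⟨h2, h3⟩
        · rw [if_pos (he.trans h1)]; exact le_max_right _ _
        · exact absurd (h3.symm.trans h1) (by decide)
        · exact absurd (h3.symm.trans h1) (by decide)
      · -- z'' k = mns ⇒ z' k ∈ {dot, mns}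
        rcases h k with ⟨he, hne⟩ | ⟨h2, h3⟩ | ⟨h2, h3⟩
        · have hv : z' k = Sgn.mns := he.trans h1
          rw [if_neg (sgn_ne hv (by decide))]
          have : x k ≤ 0 := (hc k).2.2 (by rw [hzzval, if_neg (by simp [hv, h1]), hv])
          linarith
        · rw [if_neg (sgn_ne h2 (by decide))]
          have : x k = 0 := (hc k).1 (by rw [hzzval, if_pos (Or.inl h2)])
          linarith
        · exact absurd (h3.symm.trans h1) (by decide)
    exact ⟨⟨hbnd, hcz'⟩, hbnd, hcz''⟩
  -- backward map: from the intersection into the limit cell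
  have hmem₂ : ∀ ε : ℝ, 0 < ε → ∀ x, x ∈ dualCell z' ∩ shiftedDualCell z'' ε →
      WithLp.toLp 2 (fun k => if z' k = Sgn.pls then x k - ε else x k) ∈ dualCell zz := by
    intro ε hε x hx
    obtain ⟨⟨hb, hc'⟩, _, hc''⟩ := hx
    have hge : ∀ k, z' k = Sgn.pls → ε ≤ x k := by
      intro k hp
      rcases h k with ⟨he, hne⟩ | ⟨h1, h2⟩ | ⟨h1, h2⟩
      · exact (hc'' k).2.1 (by rw [← he, hp])
      · exact absurd (h1.symm.trans hp) (by decide)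
      · exact le_of_eq ((hc'' k).1 h2).symm
    have hbnd : ∀ k, (if z' k = Sgn.pls then x k - ε else x k) ∈ Set.Icc (-1 : ℝ) 1 := by
      intro k
      by_cases hp : z' k = Sgn.pls
      · rw [if_pos hp]
        have h1 := hge k hp
        have h2 := (hb k).2
        constructor <;> linarith
      · rw [if_neg hp]; exact hb k
    have hczz : ∀ k, (zz k = Sgn.dot → (if z' k = Sgn.pls then x k - ε else x k) = 0) ∧
        (zz k = Sgn.pls → 0 ≤ (if z' k = Sgn.pls then x k - ε else x k)) ∧
        (zz k = Sgn.mns → (if z' k = Sgn.pls then x k - ε else x k) ≤ 0) := by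
      intro k
      refine ⟨fun h1 => ?_, fun h1 => ?_, fun h1 => ?_⟩
      · -- zz k = dot ⇒ z' k = dot or z'' k = dot
        rw [hzzval] at h1
        by_cases hor : z' k = Sgn.dot ∨ z'' k = Sgn.dot
        · rcases hor with hor | hor
          · rw [if_neg (sgn_ne hor (by decide))]
            exact (hc' k).1 hor
          · rcases h k with ⟨he, hne⟩ | ⟨h2, h3⟩ | ⟨h2, h3⟩
            · exact absurd (he.trans hor) hne
            · exact absurd (h3.symm.trans hor) (by decide)
            · rw [if_pos h2]
              have : x k = ε := (hc'' k).1 hor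
              linarith
        · rw [if_neg hor] at h1
          rcases h k with ⟨he, hne⟩ | ⟨h2, h3⟩ | ⟨h2, h3⟩
          · exact absurd h1 hne
          · exact absurd (Or.inl h2) hor
          · exact absurd (Or.inr h3) hor
      · -- zz k = pls ⇒ z' k = pls, z'' k = pls
        rw [hzzval] at h1
        by_cases hor : z' k = Sgn.dot ∨ z'' k = Sgn.dot
        · rw [if_pos hor] at h1; exact absurd h1 (by decide)
        · rw [if_neg hor] at h1
          rw [if_pos h1]
          rcases h k with ⟨he, hne⟩ | ⟨h2, h3⟩ | ⟨h2, h3⟩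
          · have := (hc'' k).2.1 (by rw [← he, h1])
            linarith
          · exact absurd (h2.symm.trans h1) (by decide)
          · exact absurd (Or.inr h3) hor
      · -- zz k = mns ⇒ z' k = mns
        rw [hzzval] at h1
        by_cases hor : z' k = Sgn.dot ∨ z'' k = Sgn.dot
        · rw [if_pos hor] at h1; exact absurd h1 (by decide)
        · rw [if_neg hor] at h1
          rw [if_neg (sgn_ne h1 (by decide))]
          exact (hc' k).2.2 h1
    exact ⟨hbnd, hczz⟩
  have hzero : (0 : EuclideanSpace ℝ (Fin d)) ∈ dualCell zz := by
    refine ⟨fun k => by norm_num, fun k => ?_⟩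
    exact ⟨fun _ => rfl, fun _ => le_refl _, fun _ => le_refl _⟩
  -- main Hausdorff estimate
  have key : ∀ ε : ℝ, 0 < ε → ε < 1 →
      Metric.hausdorffDist (dualCell z' ∩ shiftedDualCell z'' ε) (dualCell zz)
        ≤ Real.sqrt d * ε := by
    intro ε hε hε1
    apply Metric.hausdorffDist_le_of_mem_dist
      (mul_nonneg (Real.sqrt_nonneg _) hε.le)
    · intro x hx
      refine ⟨_, hmem₂ ε hε x hx, ?_⟩
      apply euclid_dist_le _ _ ε hε.le
      intro k
      show |x k - (if z' k = Sgn.pls then x k - ε else x k)| ≤ ε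
      by_cases hp : z' k = Sgn.pls
      · rw [if_pos hp, show x k - (x k - ε) = ε by ring, abs_of_nonneg hε.le]
      · rw [if_neg hp]; simp [hε.le]
    · intro y hy
      refine ⟨_, hmem₁ ε hε hε1.le y hy, ?_⟩
      apply euclid_dist_le _ _ ε hε.le
      intro k
      rw [abs_sub_comm]
      show |(if z' k = Sgn.pls then max (y k) ε else y k) - y k| ≤ ε
      by_cases hp : z' k = Sgn.pls
      · rw [if_pos hp]
        have hy0 : 0 ≤ y k := by
          obtain ⟨_, hc⟩ := hy
          rcases h k with ⟨he, hne⟩ | ⟨h1, h2⟩ | ⟨h1, h2⟩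
          · have hz2 : z'' k = Sgn.pls := by rw [← he, hp]
            exact (hc k).2.1 (by rw [hzzval, if_neg (by simp [hp, hz2]), hp])
          · exact absurd (h1.symm.trans hp) (by decide)
          · exact le_of_eq ((hc k).1 (by rw [hzzval, if_pos (Or.inr h2)])).symm
        rw [abs_of_nonneg (by simp [le_max_left])]
        have : max (y k) ε ≤ y k + ε := max_le (by linarith) (by linarith)
        linarith
      · rw [if_neg hp]; simp [hε.le]
  refine ⟨fun ε hε hε1 => ⟨_, hmem₁ ε hε hε1.le 0 hzero⟩, ?_⟩
  have h0 : ∀ᶠ ε in nhdsWithin (0 : ℝ) (Set.Ioi 0),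
      0 ≤ Metric.hausdorffDist (dualCell z' ∩ shiftedDualCell z'' ε) (dualCell zz) := by
    filter_upwards with ε using Metric.hausdorffDist_nonneg
  have h1 : ∀ᶠ ε in nhdsWithin (0 : ℝ) (Set.Ioi 0),
      Metric.hausdorffDist (dualCell z' ∩ shiftedDualCell z'' ε) (dualCell zz)
        ≤ Real.sqrt d * ε := by
    filter_upwards [Ioo_mem_nhdsGT_of_mem (Set.left_mem_Ico.2 one_pos)] with ε hε
    exact key ε hε.1 hε.2
  have h2 : Tendsto (fun ε : ℝ => Real.sqrt d * ε) (nhdsWithin (0 : ℝ) (Set.Ioi 0)) (nhds 0) := by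
    have := ((tendsto_id : Tendsto id (nhds (0 : ℝ)) (nhds 0)).const_mul (Real.sqrt d))
    simp only [id, mul_zero] at this
    exact this.mono_left nhdsWithin_le_nhds
  exact squeeze_zero' h0 h1 h2
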